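/- Conditioning reduces the deception exponent: for any joint full-support distribution P on X × Z, E_Z(D) ≤ E(D), i.e., max over joint Q on X×Z of [R_{X|Z}(D,Q) − D(Q‖P_{XZ})] ≤ max over Q on X of [R(D,Q) − D(Q‖P_X)], where P_X is the X-marginal of P. -/

import Mathlib

open scoped BigOperators

/-- A probability distribution on a finite alphabet. -/
def IsProbDist {X : Type*} [Fintype X] (p : X → ℝ) : Prop :=
  (∀ x, 0 ≤ p x) ∧ ∑ x, p x = 1

/-- Relative entropy (KL divergence), natural log, convention 0 log 0 = 0. -/
noncomputable def klDiv {X : Type*} [Fintype X] (Q P : X → ℝ) : ℝ :=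
  ∑ x, Q x * Real.log (Q x / P x)

/-- Mutual information of the joint law Q(x)W(y|x). -/
noncomputable def mutualInfo {X Y : Type*} [Fintype X] [Fintype Y]
    (Q : X → ℝ) (W : X → Y → ℝ) : ℝ :=
  ∑ x, ∑ y, Q x * W x y * Real.log (W x y / (∑ x', Q x' * W x' y))

/-- Rate-distortion function `R(D,Q)`. -/
noncomputable def rateDistortion {X Y : Type*} [Fintype X] [Fintype Y]
    (d : X → Y → ℝ) (D : ℝ) (Q : X → ℝ) : ℝ :=
  sInf {r | ∃ W : X → Y → ℝ, (∀ x y, 0 ≤ W x y) ∧ (∀ x, ∑ y, W x y = 1) ∧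
    (∑ x, ∑ y, Q x * W x y * d x y) ≤ D ∧ r = mutualInfo Q W}

/-- Per-symbol mean distortion between two length-n sequences. -/
noncomputable def meanDist {X Y : Type*} (d : X → Y → ℝ) {n : ℕ}
    (x : Fin n → X) (y : Fin n → Y) : ℝ :=
  (1 / (n : ℝ)) * ∑ i, d (x i) (y i)

/-- Empirical distribution (type) of a sequence. -/
noncomputable def empDist {X : Type*} [Fintype X] [DecidableEq X] {n : ℕ}
    (x : Fin n → X) (a : X) : ℝ :=
  ((Finset.univ.filter (fun i => x i = a)).card : ℝ) / n

/-- Counting function of an adversarial strategy list: 1-based index of the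
first guess within mean distortion `D` of `x` (0 if none exists). -/
noncomputable def countG {X Y : Type*} (d : X → Y → ℝ) (D : ℝ) {n : ℕ}
    (S : List (Fin n → Y)) (x : Fin n → X) : ℕ :=
  sInf {j : ℕ | ∃ y ∈ S.take j, meanDist d x y ≤ D}

/-- n-fold product (i.i.d.) distribution. -/
noncomputable def prodDist {X : Type*} (P : X → ℝ) {n : ℕ} (x : Fin n → X) : ℝ :=
  ∏ i, P (x i)

/-- Conditional mutual information `I(X;Y|Z)` under the joint law `Q(x,z)W(y|x,z)`. -/
noncomputable def condMutualInfo {X Z Y : Type*} [Fintype X] [Fintype Z] [Fintype Y]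
    (Q : X → Z → ℝ) (W : X → Z → Y → ℝ) : ℝ :=
  ∑ x, ∑ z, ∑ y, Q x z * W x z y *
    Real.log (W x z y * (∑ x', Q x' z) / (∑ x', Q x' z * W x' z y))

/-- Conditional rate-distortion function `R_{X|Z}(D,Q)` (side information at both
encoder and decoder). -/
noncomputable def condRateDistortion {X Z Y : Type*} [Fintype X] [Fintype Z] [Fintype Y]
    (d : X → Y → ℝ) (D : ℝ) (Q : X → Z → ℝ) : ℝ :=
  sInf {r | ∃ W : X → Z → Y → ℝ, (∀ x z y, 0 ≤ W x z y) ∧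
    (∀ x z, ∑ y, W x z y = 1) ∧
    (∑ x, ∑ z, ∑ y, Q x z * W x z y * d x y) ≤ D ∧
    r = condMutualInfo Q W}

/-- A joint probability distribution on `X × Z`. -/
def IsJointProbDist {X Z : Type*} [Fintype X] [Fintype Z] (p : X → Z → ℝ) : Prop :=
  (∀ x z, 0 ≤ p x z) ∧ ∑ x, ∑ z, p x z = 1

/-- Relative entropy between joint distributions on `X × Z`. -/
noncomputable def klDiv2 {X Z : Type*} [Fintype X] [Fintype Z]
    (Q P : X → Z → ℝ) : ℝ :=
  ∑ x, ∑ z, Q x z * Real.log (Q x z / P x z)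

/-- Joint empirical distribution of a pair of sequences. -/
noncomputable def jointEmpDist {X Z : Type*} [DecidableEq X] [DecidableEq Z] {n : ℕ}
    (x : Fin n → X) (z : Fin n → Z) (a : X) (b : Z) : ℝ :=
  ((Finset.univ.filter (fun i : Fin n => x i = a ∧ z i = b)).card : ℝ) / n

section Aux

open Finset

lemma key_pt {x y : ℝ} (hx : 0 < x) (hy : 0 < y) : x - y ≤ x * Real.log (x / y) := by
  have h := Real.log_le_sub_one_of_pos (div_pos hy hx)
  rw [Real.log_div hy.ne' hx.ne'] at h
  rw [Real.log_div hx.ne' hy.ne']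
  have hyx : y / x * x = y := div_mul_cancel₀ y hx.ne'
  nlinarith

lemma pt_ge {a b : ℝ} (ha : 0 ≤ a) (hb : 0 ≤ b) (hab : 0 < a → 0 < b) :
    a - b ≤ a * Real.log (a / b) := by
  rcases ha.lt_or_eq with h | h
  · exact key_pt h (hab h)
  · rw [← h]; simp; linarith

lemma gibbs {ι : Type*} (s : Finset ι) (a b : ι → ℝ)
    (ha : ∀ i ∈ s, 0 ≤ a i) (hb : ∀ i ∈ s, 0 ≤ b i)
    (hab : ∀ i ∈ s, 0 < a i → 0 < b i)
    (hsum : ∑ i ∈ s, b i ≤ ∑ i ∈ s, a i) :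
    0 ≤ ∑ i ∈ s, a i * Real.log (a i / b i) := by
  have h : ∑ i ∈ s, (a i - b i) ≤ ∑ i ∈ s, a i * Real.log (a i / b i) :=
    Finset.sum_le_sum fun i hi => pt_ge (ha i hi) (hb i hi) (hab i hi)
  rw [Finset.sum_sub_distrib] at h
  linarith

lemma logsum {ι : Type*} (s : Finset ι) (a b : ι → ℝ)
    (ha : ∀ i ∈ s, 0 ≤ a i) (hb : ∀ i ∈ s, 0 < b i) :
    (∑ i ∈ s, a i) * Real.log ((∑ i ∈ s, a i) / (∑ i ∈ s, b i)) ≤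
      ∑ i ∈ s, a i * Real.log (a i / b i) := by
  set A := ∑ i ∈ s, a i with hA
  set B := ∑ i ∈ s, b i with hB
  have hA0 : 0 ≤ A := Finset.sum_nonneg ha
  rcases hA0.lt_or_eq with hApos | hAz
  · have hsne : s.Nonempty := by
      by_contra h
      rw [Finset.not_nonempty_iff_eq_empty] at h
      rw [hA, h] at hApos; simp at hApos
    have hBpos : 0 < B := Finset.sum_pos hb hsne
    have key : ∀ i ∈ s, a i * Real.log (A / B) + (a i - b i * (A / B)) ≤
        a i * Real.log (a i / b i) := by
      intro i hi
      rcases (ha i hi).lt_or_eq with hai | hai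
      · have hbi := hb i hi
        have hy : 0 < b i * (A / B) := mul_pos hbi (div_pos hApos hBpos)
        have h1 := key_pt hai hy
        have hlog : Real.log (a i / (b i * (A / B))) =
            Real.log (a i / b i) - Real.log (A / B) := by
          rw [show a i / (b i * (A / B)) = (a i / b i) / (A / B) by field_simp,
            Real.log_div (by positivity) (by positivity)]
        rw [hlog] at h1
        nlinarith
      · rw [← hai]; simp
        exact (mul_pos (hb i hi) (div_pos hApos hBpos)).le
    have hsum := Finset.sum_le_sum key
    rw [Finset.sum_add_distrib, ← Finset.sum_mul, Finset.sum_sub_distrib,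
      ← Finset.sum_mul, ← hA, ← hB] at hsum
    have : B * (A / B) = A := by field_simp
    nlinarith
  · have hall : ∀ i ∈ s, a i = 0 := by
      intro i hi
      exact (Finset.sum_eq_zero_iff_of_nonneg ha |>.mp hAz.symm) i hi
    rw [← hAz]
    simp only [zero_mul]
    apply Finset.sum_nonneg
    intro i hi; rw [hall i hi]; simp

lemma mul_pos_left' {a b : ℝ} (ha : 0 ≤ a) (h : 0 < a * b) : 0 < a := by
  rcases ha.lt_or_eq with h' | h'
  · exact h'
  · rw [← h'] at h; simp at h

lemma mul_pos_right' {a b : ℝ} (hb : 0 ≤ b) (h : 0 < a * b) : 0 < b := by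
  rcases hb.lt_or_eq with h' | h'
  · exact h'
  · rw [← h'] at h; simp at h

lemma negmullog_bound {x : ℝ} (hx : 0 ≤ x) : -(x * Real.log x) ≤ (Real.exp 1)⁻¹ := by
  rcases hx.lt_or_eq with h | h
  · have he : (0:ℝ) < Real.exp 1 := Real.exp_pos 1
    have hpos : 0 < (x * Real.exp 1)⁻¹ := by positivity
    have hl := Real.log_le_sub_one_of_pos hpos
    rw [Real.log_inv, Real.log_mul h.ne' he.ne', Real.log_exp] at hl
    have hinv : x * (x * Real.exp 1)⁻¹ = (Real.exp 1)⁻¹ := by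
      field_simp
    nlinarith
  · rw [← h]; simp; positivity

end Aux
section MI

open Finset

variable {X Z Y : Type*} [Fintype X] [Fintype Z] [Fintype Y]

lemma mutualInfo_nonneg (Q : X → ℝ) (W : X → Y → ℝ) (hQ : IsProbDist Q)
    (hW0 : ∀ x y, 0 ≤ W x y) (hW1 : ∀ x, ∑ y, W x y = 1) :
    0 ≤ mutualInfo Q W := by
  obtain ⟨hQ0, hQ1⟩ := hQ
  set q : Y → ℝ := fun y => ∑ x', Q x' * W x' y with hq
  have key : mutualInfo Q W = ∑ p : X × Y, (Q p.1 * W p.1 p.2) *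
      Real.log ((Q p.1 * W p.1 p.2) / (Q p.1 * q p.2)) := by
    rw [Fintype.sum_prod_type]
    unfold mutualInfo
    refine Finset.sum_congr rfl fun x _ => Finset.sum_congr rfl fun y _ => ?_
    rcases (mul_nonneg (hQ0 x) (hW0 x y)).lt_or_eq with h | h
    · have hQx : 0 < Q x := mul_pos_left' (hQ0 x) h
      congr 1
      rw [mul_div_mul_left _ _ hQx.ne']
    · rw [← h]; simp
  rw [key]
  apply gibbs
  · intro p _; exact mul_nonneg (hQ0 p.1) (hW0 p.1 p.2)
  · intro p _; exact mul_nonneg (hQ0 p.1)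
      (Finset.sum_nonneg fun x _ => mul_nonneg (hQ0 x) (hW0 x p.2))
  · intro p _ hpos
    have hQx : 0 < Q p.1 := mul_pos_left' (hQ0 p.1) hpos
    refine mul_pos hQx (lt_of_lt_of_le hpos ?_)
    exact Finset.single_le_sum (f := fun x' => Q x' * W x' p.2)
      (fun i _ => mul_nonneg (hQ0 i) (hW0 i p.2)) (Finset.mem_univ p.1)
  · have hqsum : ∑ y, q y = 1 := by
      rw [hq, Finset.sum_comm]
      simp_rw [← Finset.mul_sum, hW1, mul_one]
      exact hQ1
    have h1 : ∑ p : X × Y, Q p.1 * W p.1 p.2 = 1 := by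
      rw [Fintype.sum_prod_type]
      simp_rw [← Finset.mul_sum, hW1, mul_one]
      exact hQ1
    have h2 : ∑ p : X × Y, Q p.1 * q p.2 = 1 := by
      rw [Fintype.sum_prod_type]
      simp_rw [← Finset.mul_sum, hqsum, mul_one]
      exact hQ1
    rw [h1, h2]

lemma mutualInfo_le_bound (Q : X → ℝ) (W : X → Y → ℝ) (hQ : IsProbDist Q)
    (hW0 : ∀ x y, 0 ≤ W x y) (hW1 : ∀ x, ∑ y, W x y = 1) :
    mutualInfo Q W ≤ (Fintype.card X : ℝ) * (Real.exp 1)⁻¹ := by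
  obtain ⟨hQ0, hQ1⟩ := hQ
  unfold mutualInfo
  set q : Y → ℝ := fun y => ∑ x', Q x' * W x' y with hq
  have per : ∀ x, ∑ y, Q x * W x y * Real.log (W x y / q y) ≤ (Real.exp 1)⁻¹ := by
    intro x
    have step : ∀ y, Q x * W x y * Real.log (W x y / q y) ≤
        (Q x * (-Real.log (Q x))) * W x y := by
      intro y
      rcases (mul_nonneg (hQ0 x) (hW0 x y)).lt_or_eq with h | h
      · have hQx : 0 < Q x := mul_pos_left' (hQ0 x) h
        have hWxy : 0 < W x y := mul_pos_right' (hW0 x y) h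
        have hqge : Q x * W x y ≤ q y :=
          Finset.single_le_sum (f := fun x' => Q x' * W x' y)
            (fun i _ => mul_nonneg (hQ0 i) (hW0 i y)) (Finset.mem_univ x)
        have hqy : 0 < q y := lt_of_lt_of_le h hqge
        have hle : W x y / q y ≤ (Q x)⁻¹ := by
          rw [div_le_iff₀ hqy]
          calc W x y = (Q x)⁻¹ * (Q x * W x y) := by field_simp
            _ ≤ (Q x)⁻¹ * q y := by
                exact mul_le_mul_of_nonneg_left hqge (by positivity)
        have hlog : Real.log (W x y / q y) ≤ -Real.log (Q x) := by
          rw [← Real.log_inv]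
          exact Real.log_le_log (by positivity) hle
        have h2 := mul_le_mul_of_nonneg_left hlog h.le
        nlinarith
      · rcases mul_eq_zero.mp h.symm with h' | h'
        · rw [h']; simp
        · rw [h']; simp
    have hsum : ∑ y, Q x * W x y * Real.log (W x y / q y) ≤
        ∑ y, (Q x * (-Real.log (Q x))) * W x y :=
      Finset.sum_le_sum fun y _ => step y
    rw [← Finset.mul_sum, hW1, mul_one] at hsum
    refine hsum.trans ?_
    have := negmullog_bound (hQ0 x)
    nlinarith
  calc ∑ x, ∑ y, Q x * W x y * Real.log (W x y / q y)
      ≤ ∑ _x : X, (Real.exp 1)⁻¹ := Finset.sum_le_sum fun x _ => per x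
    _ = (Fintype.card X : ℝ) * (Real.exp 1)⁻¹ := by
        rw [Finset.sum_const, Finset.card_univ, nsmul_eq_mul]

lemma condMutualInfo_nonneg (Q : X → Z → ℝ) (W : X → Z → Y → ℝ)
    (hQ : IsJointProbDist Q) (hW0 : ∀ x z y, 0 ≤ W x z y)
    (hW1 : ∀ x z, ∑ y, W x z y = 1) :
    0 ≤ condMutualInfo Q W := by
  obtain ⟨hQ0, hQ1⟩ := hQ
  set Qz : Z → ℝ := fun z => ∑ x', Q x' z with hQz
  set m : Z → Y → ℝ := fun z y => ∑ x', Q x' z * W x' z y with hm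
  have hQznn : ∀ z, 0 ≤ Qz z := fun z => Finset.sum_nonneg fun x _ => hQ0 x z
  have hmnn : ∀ z y, 0 ≤ m z y := fun z y =>
    Finset.sum_nonneg fun x _ => mul_nonneg (hQ0 x z) (hW0 x z y)
  set b : X → Z → Y → ℝ :=
    fun x z y => if Qz z = 0 then 0 else Q x z * m z y / Qz z with hb
  have key : condMutualInfo Q W =
      ∑ p : X × Z × Y, (Q p.1 p.2.1 * W p.1 p.2.1 p.2.2) *
        Real.log ((Q p.1 p.2.1 * W p.1 p.2.1 p.2.2) / b p.1 p.2.1 p.2.2) := by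
    rw [Fintype.sum_prod_type]
    unfold condMutualInfo
    refine Finset.sum_congr rfl fun x _ => ?_
    rw [Fintype.sum_prod_type]
    refine Finset.sum_congr rfl fun z _ => Finset.sum_congr rfl fun y _ => ?_
    rcases (mul_nonneg (hQ0 x z) (hW0 x z y)).lt_or_eq with h | h
    · have hQxz : 0 < Q x z := mul_pos_left' (hQ0 x z) h
      have hQzz : 0 < Qz z := lt_of_lt_of_le hQxz
        (Finset.single_le_sum (f := fun x' => Q x' z) (fun i _ => hQ0 i z)
          (Finset.mem_univ x))
      have hmzy : 0 < m z y := lt_of_lt_of_le h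
        (Finset.single_le_sum (f := fun x' => Q x' z * W x' z y)
          (fun i _ => mul_nonneg (hQ0 i z) (hW0 i z y)) (Finset.mem_univ x))
      have e1 : (∑ x', Q x' z) = Qz z := rfl
      have e2 : (∑ x', Q x' z * W x' z y) = m z y := rfl
      rw [e1, e2]
      congr 1
      simp only [hb]
      rw [if_neg hQzz.ne']
      rw [div_div_eq_mul_div,
        show Q x z * W x z y * Qz z / (Q x z * m z y) = W x z y * Qz z / m z y by
          rw [mul_assoc, mul_div_mul_left _ _ hQxz.ne']]
    · rw [← h]; simp
  rw [key]
  apply gibbs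
  · intro p _; exact mul_nonneg (hQ0 p.1 p.2.1) (hW0 p.1 p.2.1 p.2.2)
  · intro p _
    rw [hb]
    by_cases h : Qz p.2.1 = 0
    · simp [h]
    · show (0:ℝ) ≤ if Qz p.2.1 = 0 then 0 else Q p.1 p.2.1 * m p.2.1 p.2.2 / Qz p.2.1
      rw [if_neg h]
      exact div_nonneg (mul_nonneg (hQ0 _ _) (hmnn _ _)) (hQznn _)
  · intro p _ hpos
    have hQxz : 0 < Q p.1 p.2.1 := mul_pos_left' (hQ0 p.1 p.2.1) hpos
    have hQzz : 0 < Qz p.2.1 := lt_of_lt_of_le hQxz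
      (Finset.single_le_sum (f := fun x' => Q x' p.2.1) (fun i _ => hQ0 i p.2.1)
        (Finset.mem_univ p.1))
    have hmzy : 0 < m p.2.1 p.2.2 := lt_of_lt_of_le hpos
      (Finset.single_le_sum (f := fun x' => Q x' p.2.1 * W x' p.2.1 p.2.2)
        (fun i _ => mul_nonneg (hQ0 i p.2.1) (hW0 i p.2.1 p.2.2)) (Finset.mem_univ p.1))
    show 0 < (if Qz p.2.1 = 0 then 0 else Q p.1 p.2.1 * m p.2.1 p.2.2 / Qz p.2.1)
    rw [if_neg hQzz.ne']
    exact div_pos (mul_pos hQxz hmzy) hQzz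
  · have hmsum : ∀ z, ∑ y, m z y = Qz z := by
      intro z
      rw [hm, hQz, Finset.sum_comm]
      simp_rw [← Finset.mul_sum, hW1, mul_one]
    have hQzsum : ∑ z, Qz z = 1 := by rw [hQz, Finset.sum_comm]; exact hQ1
    have ha1 : ∑ p : X × Z × Y, Q p.1 p.2.1 * W p.1 p.2.1 p.2.2 = 1 := by
      rw [Fintype.sum_prod_type]
      calc ∑ x, ∑ p : Z × Y, Q x p.1 * W x p.1 p.2
          = ∑ x, ∑ z, ∑ y, Q x z * W x z y := by
            refine Finset.sum_congr rfl fun x _ => ?_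
            rw [Fintype.sum_prod_type]
        _ = ∑ x, ∑ z, Q x z := by
            refine Finset.sum_congr rfl fun x _ => Finset.sum_congr rfl fun z _ => ?_
            rw [← Finset.mul_sum, hW1, mul_one]
        _ = 1 := hQ1
    have hb1 : ∑ p : X × Z × Y, b p.1 p.2.1 p.2.2 = 1 := by
      rw [Fintype.sum_prod_type]
      calc ∑ x, ∑ p : Z × Y, b x p.1 p.2
          = ∑ x, ∑ z, ∑ y, b x z y := by
            refine Finset.sum_congr rfl fun x _ => ?_
            rw [Fintype.sum_prod_type]
        _ = ∑ z, ∑ x, ∑ y, b x z y := Finset.sum_comm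
        _ = ∑ z, Qz z := by
            refine Finset.sum_congr rfl fun z _ => ?_
            by_cases h : Qz z = 0
            · simp [hb, h]
            · have hQzpos : 0 < Qz z := (hQznn z).lt_of_ne (Ne.symm h)
              calc ∑ x, ∑ y, b x z y
                  = ∑ x, Q x z * Qz z / Qz z := by
                    refine Finset.sum_congr rfl fun x _ => ?_
                    simp only [hb, h, if_false]
                    rw [← Finset.sum_div, ← Finset.mul_sum, hmsum z]
                _ = ∑ x, Q x z := by
                    refine Finset.sum_congr rfl fun x _ => ?_
                    rw [mul_div_assoc, div_self h, mul_one]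
                _ = Qz z := rfl
        _ = 1 := hQzsum
    rw [ha1, hb1]

end MI
section Main

open Finset

variable {X Z Y : Type*} [Fintype X] [Fintype Z] [Fintype Y]

lemma klDiv_nonneg' (Q p : X → ℝ) (hQ : IsProbDist Q)
    (hp : ∀ a, 0 < p a) (hp1 : ∑ a, p a = 1) : 0 ≤ klDiv Q p := by
  unfold klDiv
  apply gibbs _ _ _ (fun i _ => hQ.1 i) (fun i _ => (hp i).le) (fun i _ _ => hp i)
  rw [hp1, hQ.2]

lemma klDiv_marg_le (Q P : X → Z → ℝ)
    (hQ0 : ∀ x z, 0 ≤ Q x z) (hP : ∀ x z, 0 < P x z) :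
    klDiv (fun a => ∑ b, Q a b) (fun a => ∑ b, P a b) ≤ klDiv2 Q P := by
  unfold klDiv klDiv2
  apply Finset.sum_le_sum
  intro x _
  exact logsum univ (fun z => Q x z) (fun z => P x z)
    (fun z _ => hQ0 x z) (fun z _ => hP x z)

lemma rd_bddBelow (d : X → Y → ℝ) (D : ℝ) (Q : X → ℝ) (hQ : IsProbDist Q) :
    BddBelow {r | ∃ W : X → Y → ℝ, (∀ x y, 0 ≤ W x y) ∧ (∀ x, ∑ y, W x y = 1) ∧
      (∑ x, ∑ y, Q x * W x y * d x y) ≤ D ∧ r = mutualInfo Q W} := by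
  refine ⟨0, ?_⟩
  rintro r ⟨W, h0, h1, _, rfl⟩
  exact mutualInfo_nonneg Q W hQ h0 h1

lemma W0_mem [DecidableEq Y] (d : X → Y → ℝ) (hzero : ∀ x, ∃ y, d x y = 0) (D : ℝ) (hD : 0 ≤ D)
    (Q : X → ℝ) (hQ : ∀ x, 0 ≤ Q x) :
    mutualInfo Q (fun x y => if y = Classical.choose (hzero x) then (1:ℝ) else 0) ∈
      {r | ∃ W : X → Y → ℝ, (∀ x y, 0 ≤ W x y) ∧ (∀ x, ∑ y, W x y = 1) ∧
        (∑ x, ∑ y, Q x * W x y * d x y) ≤ D ∧ r = mutualInfo Q W} := by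
  refine ⟨_, fun x y => ?_, fun x => ?_, ?_, rfl⟩
  · split <;> norm_num
  · simp
  · have hterm : ∀ x, ∑ y, Q x * (if y = Classical.choose (hzero x) then (1:ℝ) else 0)
        * d x y = Q x * d x (Classical.choose (hzero x)) := by
      intro x
      rw [Finset.sum_eq_single (Classical.choose (hzero x))]
      · simp
      · intro y _ hy; simp [hy]
      · intro h; exact absurd (Finset.mem_univ _) h
    calc ∑ x, ∑ y, Q x * (if y = Classical.choose (hzero x) then (1:ℝ) else 0) * d x y
        = ∑ x, Q x * d x (Classical.choose (hzero x)) :=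
          Finset.sum_congr rfl fun x _ => hterm x
      _ = 0 := by
          refine Finset.sum_eq_zero fun x _ => ?_
          rw [Classical.choose_spec (hzero x), mul_zero]
      _ ≤ D := hD

lemma rd_le_C (d : X → Y → ℝ) (hzero : ∀ x, ∃ y, d x y = 0) (D : ℝ) (hD : 0 ≤ D)
    (Q : X → ℝ) (hQ : IsProbDist Q) :
    rateDistortion d (Y := Y) D Q ≤ (Fintype.card X : ℝ) * (Real.exp 1)⁻¹ := by
  classical
  refine csInf_le_of_le (rd_bddBelow d D Q hQ) (W0_mem d hzero D hD Q hQ.1) ?_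
  refine mutualInfo_le_bound Q _ hQ (fun x y => ?_) (fun x => ?_)
  · split <;> norm_num
  · simp

lemma condMI_le_MI (Q : X → Z → ℝ) (W : X → Y → ℝ) (hQ : IsJointProbDist Q)
    (hW0 : ∀ x y, 0 ≤ W x y) (hW1 : ∀ x, ∑ y, W x y = 1) :
    condMutualInfo Q (fun x _ y => W x y) ≤ mutualInfo (fun a => ∑ b, Q a b) W := by
  obtain ⟨hQ0, hQ1⟩ := hQ
  set QX : X → ℝ := fun x => ∑ z, Q x z with hQX
  set Qz : Z → ℝ := fun z => ∑ x', Q x' z with hQz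
  set q : Y → ℝ := fun y => ∑ x', QX x' * W x' y with hq
  set m : Z → Y → ℝ := fun z y => ∑ x', Q x' z * W x' y with hm
  have hQXnn : ∀ x, 0 ≤ QX x := fun x => Finset.sum_nonneg fun z _ => hQ0 x z
  have hQznn : ∀ z, 0 ≤ Qz z := fun z => Finset.sum_nonneg fun x _ => hQ0 x z
  have hqnn : ∀ y, 0 ≤ q y := fun y =>
    Finset.sum_nonneg fun x _ => mul_nonneg (hQXnn x) (hW0 x y)
  have hmnn : ∀ z y, 0 ≤ m z y := fun z y =>
    Finset.sum_nonneg fun x _ => mul_nonneg (hQ0 x z) (hW0 x y)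
  have hMIq : mutualInfo QX W = ∑ x, ∑ y, QX x * W x y * Real.log (W x y / q y) := rfl
  have hCMIq : condMutualInfo Q (fun x _ y => W x y) =
      ∑ x, ∑ z, ∑ y, Q x z * W x y * Real.log (W x y * Qz z / m z y) := rfl
  have hMI3 : mutualInfo QX W =
      ∑ x, ∑ z, ∑ y, Q x z * W x y * Real.log (W x y / q y) := by
    rw [hMIq]
    refine Finset.sum_congr rfl fun x _ => ?_
    rw [Finset.sum_comm]
    refine Finset.sum_congr rfl fun y _ => ?_
    show (∑ z, Q x z) * W x y * Real.log (W x y / q y) = _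
    rw [Finset.sum_mul, Finset.sum_mul]
  have hdiff : mutualInfo QX W - condMutualInfo Q (fun x _ y => W x y) =
      ∑ x, ∑ z, ∑ y, Q x z * W x y *
        (Real.log (m z y) - Real.log (Qz z) - Real.log (q y)) := by
    rw [hMI3, hCMIq, ← Finset.sum_sub_distrib]
    refine Finset.sum_congr rfl fun x _ => ?_
    rw [← Finset.sum_sub_distrib]
    refine Finset.sum_congr rfl fun z _ => ?_
    rw [← Finset.sum_sub_distrib]
    refine Finset.sum_congr rfl fun y _ => ?_
    rcases (mul_nonneg (hQ0 x z) (hW0 x y)).lt_or_eq with h | h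
    · have hQxz : 0 < Q x z := mul_pos_left' (hQ0 x z) h
      have hWxy : 0 < W x y := mul_pos_right' (hW0 x y) h
      have hQzz : 0 < Qz z := lt_of_lt_of_le hQxz
        (Finset.single_le_sum (f := fun x' => Q x' z) (fun i _ => hQ0 i z)
          (Finset.mem_univ x))
      have hQXx : 0 < QX x := lt_of_lt_of_le hQxz
        (Finset.single_le_sum (f := fun z' => Q x z') (fun i _ => hQ0 x i)
          (Finset.mem_univ z))
      have hqy : 0 < q y := lt_of_lt_of_le (mul_pos hQXx hWxy)
        (Finset.single_le_sum (f := fun x' => QX x' * W x' y)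
          (fun i _ => mul_nonneg (hQXnn i) (hW0 i y)) (Finset.mem_univ x))
      have hmzy : 0 < m z y := lt_of_lt_of_le h
        (Finset.single_le_sum (f := fun x' => Q x' z * W x' y)
          (fun i _ => mul_nonneg (hQ0 i z) (hW0 i y)) (Finset.mem_univ x))
      rw [Real.log_div hWxy.ne' hqy.ne',
        Real.log_div (mul_pos hWxy hQzz).ne' hmzy.ne',
        Real.log_mul hWxy.ne' hQzz.ne']
      ring
    · rw [← h]; ring
  have hswap : ∑ x, ∑ z, ∑ y, Q x z * W x y *
        (Real.log (m z y) - Real.log (Qz z) - Real.log (q y)) =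
      ∑ p : Z × Y, m p.1 p.2 * Real.log (m p.1 p.2 / (Qz p.1 * q p.2)) := by
    rw [Fintype.sum_prod_type]
    rw [Finset.sum_comm]
    refine Finset.sum_congr rfl fun z _ => ?_
    rw [Finset.sum_comm]
    refine Finset.sum_congr rfl fun y _ => ?_
    rw [← Finset.sum_mul]
    show m z y * _ = _
    rcases (hmnn z y).lt_or_eq with h | h
    · obtain ⟨x0, hx0⟩ : ∃ x0, (0:ℝ) < Q x0 z * W x0 y := by
        by_contra hno
        push_neg at hno
        have : m z y ≤ 0 := Finset.sum_nonpos fun i _ => hno i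
        linarith
      have hQzz : 0 < Qz z := lt_of_lt_of_le (mul_pos_left' (hQ0 x0 z) hx0)
        (Finset.single_le_sum (f := fun x' => Q x' z) (fun i _ => hQ0 i z)
          (Finset.mem_univ x0))
      have hQXx : 0 < QX x0 := lt_of_lt_of_le (mul_pos_left' (hQ0 x0 z) hx0)
        (Finset.single_le_sum (f := fun z' => Q x0 z') (fun i _ => hQ0 x0 i)
          (Finset.mem_univ z))
      have hqy : 0 < q y := lt_of_lt_of_le
        (mul_pos hQXx (mul_pos_right' (hW0 x0 y) hx0))
        (Finset.single_le_sum (f := fun x' => QX x' * W x' y)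
          (fun i _ => mul_nonneg (hQXnn i) (hW0 i y)) (Finset.mem_univ x0))
      rw [Real.log_div h.ne' (mul_pos hQzz hqy).ne', Real.log_mul hQzz.ne' hqy.ne']
      ring
    · rw [← h]; ring
  have hQzsum : ∑ z, Qz z = 1 := by
    show ∑ z, ∑ x, Q x z = 1
    rw [Finset.sum_comm]; exact hQ1
  have hQXsum : ∑ x, QX x = 1 := hQ1
  have hqsum : ∑ y, q y = 1 := by
    show ∑ y, ∑ x, QX x * W x y = 1
    rw [Finset.sum_comm]
    simp_rw [← Finset.mul_sum, hW1, mul_one]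
    exact hQXsum
  have hmsum : ∀ z, ∑ y, m z y = Qz z := by
    intro z
    show ∑ y, ∑ x, Q x z * W x y = _
    rw [Finset.sum_comm]
    simp_rw [← Finset.mul_sum, hW1, mul_one]
    rfl
  have hgibbs : 0 ≤ ∑ p : Z × Y, m p.1 p.2 * Real.log (m p.1 p.2 / (Qz p.1 * q p.2)) := by
    apply gibbs
    · intro p _; exact hmnn p.1 p.2
    · intro p _; exact mul_nonneg (hQznn p.1) (hqnn p.2)
    · intro p _ hpos
      obtain ⟨x0, hx0⟩ : ∃ x0, (0:ℝ) < Q x0 p.1 * W x0 p.2 := by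
        by_contra hno
        push_neg at hno
        have : m p.1 p.2 ≤ 0 := Finset.sum_nonpos fun i _ => hno i
        linarith
      have hQzz : 0 < Qz p.1 := lt_of_lt_of_le (mul_pos_left' (hQ0 x0 p.1) hx0)
        (Finset.single_le_sum (f := fun x' => Q x' p.1) (fun i _ => hQ0 i p.1)
          (Finset.mem_univ x0))
      have hQXx : 0 < QX x0 := lt_of_lt_of_le (mul_pos_left' (hQ0 x0 p.1) hx0)
        (Finset.single_le_sum (f := fun z' => Q x0 z') (fun i _ => hQ0 x0 i)
          (Finset.mem_univ p.1))
      have hqy : 0 < q p.2 := lt_of_lt_of_le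
        (mul_pos hQXx (mul_pos_right' (hW0 x0 p.2) hx0))
        (Finset.single_le_sum (f := fun x' => QX x' * W x' p.2)
          (fun i _ => mul_nonneg (hQXnn i) (hW0 i p.2)) (Finset.mem_univ x0))
      exact mul_pos hQzz hqy
    · have hb : ∑ p : Z × Y, Qz p.1 * q p.2 = 1 := by
        rw [Fintype.sum_prod_type]
        simp_rw [← Finset.mul_sum, hqsum, mul_one]
        exact hQzsum
      have ha : ∑ p : Z × Y, m p.1 p.2 = 1 := by
        rw [Fintype.sum_prod_type]
        simp_rw [hmsum]
        exact hQzsum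
      rw [ha, hb]
  linarith [hdiff, hswap, hgibbs]

lemma condRD_le_RD (d : X → Y → ℝ) (hd : ∀ x y, 0 ≤ d x y)
    (hzero : ∀ x, ∃ y, d x y = 0) (D : ℝ) (hD : 0 ≤ D)
    (Q : X → Z → ℝ) (hQ : IsJointProbDist Q) :
    condRateDistortion d (Y := Y) D Q ≤
      rateDistortion d (Y := Y) D (fun a => ∑ b, Q a b) := by
  classical
  obtain ⟨hQ0, hQ1⟩ := hQ
  have hQX : IsProbDist (fun a => ∑ b, Q a b) :=
    ⟨fun a => Finset.sum_nonneg fun b _ => hQ0 a b, hQ1⟩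
  unfold condRateDistortion rateDistortion
  apply le_csInf
  · exact ⟨_, W0_mem d hzero D hD (fun a => ∑ b, Q a b) hQX.1⟩
  · rintro r ⟨W, hW0, hW1, hWd, rfl⟩
    have hbdd : BddBelow {r | ∃ W : X → Z → Y → ℝ, (∀ x z y, 0 ≤ W x z y) ∧
        (∀ x z, ∑ y, W x z y = 1) ∧
        (∑ x, ∑ z, ∑ y, Q x z * W x z y * d x y) ≤ D ∧
        r = condMutualInfo Q W} := by
      refine ⟨0, ?_⟩
      rintro r ⟨W', h0, h1, _, rfl⟩
      exact condMutualInfo_nonneg Q W' ⟨hQ0, hQ1⟩ h0 h1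
    have hdist : ∑ x, ∑ z, ∑ y, Q x z * W x y * d x y ≤ D := by
      calc ∑ x, ∑ z, ∑ y, Q x z * W x y * d x y
          = ∑ x, ∑ y, (∑ z, Q x z) * W x y * d x y := by
            refine Finset.sum_congr rfl fun x _ => ?_
            rw [Finset.sum_comm]
            refine Finset.sum_congr rfl fun y _ => ?_
            rw [Finset.sum_mul, Finset.sum_mul]
        _ ≤ D := hWd
    have hmem : condMutualInfo Q (fun x _ y => W x y) ∈
        {r | ∃ W : X → Z → Y → ℝ, (∀ x z y, 0 ≤ W x z y) ∧
          (∀ x z, ∑ y, W x z y = 1) ∧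
          (∑ x, ∑ z, ∑ y, Q x z * W x z y * d x y) ≤ D ∧
          r = condMutualInfo Q W} :=
      ⟨fun x _ y => W x y, fun x z y => hW0 x y, fun x z => hW1 x, hdist, rfl⟩
    exact (csInf_le hbdd hmem).trans
      (condMI_le_MI Q W ⟨hQ0, hQ1⟩ hW0 hW1)

end Main
theorem stmt18 {X Z Y : Type*} [Fintype X] [Fintype Z] [Fintype Y]
    [Nonempty X] [Nonempty Z] [Nonempty Y]
    (d : X → Y → ℝ) (hd : ∀ x y, 0 ≤ d x y)
    (hzero : ∀ x, ∃ y, d x y = 0)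
    (D : ℝ) (hD : 0 ≤ D)
    (P : X → Z → ℝ) (hP : IsJointProbDist P) (hfull : ∀ a b, 0 < P a b) :
    sSup {r | ∃ Q : X → Z → ℝ, IsJointProbDist Q ∧
        r = condRateDistortion d (Y := Y) D Q - klDiv2 Q P}
      ≤ sSup {r | ∃ Q : X → ℝ, IsProbDist Q ∧
          r = rateDistortion d (Y := Y) D Q - klDiv Q (fun a => ∑ b, P a b)} := by
  obtain ⟨hP0, hP1⟩ := hP
  have hPXpos : ∀ a, 0 < ∑ b, P a b :=
    fun a => Finset.sum_pos (fun b _ => hfull a b) Finset.univ_nonempty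
  have hbdd : BddAbove {r | ∃ Q : X → ℝ, IsProbDist Q ∧
      r = rateDistortion d (Y := Y) D Q - klDiv Q (fun a => ∑ b, P a b)} := by
    refine ⟨(Fintype.card X : ℝ) * (Real.exp 1)⁻¹, ?_⟩
    rintro r ⟨Q, hQ, rfl⟩
    have h1 := rd_le_C d hzero D hD Q hQ
    have h2 : 0 ≤ klDiv Q (fun a => ∑ b, P a b) :=
      klDiv_nonneg' Q _ hQ hPXpos hP1
    linarith
  apply csSup_le
  · exact ⟨_, P, ⟨hP0, hP1⟩, rfl⟩
  · rintro r ⟨Q, hQ, rfl⟩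
    have hQX : IsProbDist (fun a => ∑ b, Q a b) :=
      ⟨fun a => Finset.sum_nonneg fun b _ => hQ.1 a b, hQ.2⟩
    have h1 : condRateDistortion d (Y := Y) D Q ≤
        rateDistortion d (Y := Y) D (fun a => ∑ b, Q a b) :=
      condRD_le_RD d hd hzero D hD Q hQ
    have h2 : klDiv (fun a => ∑ b, Q a b) (fun a => ∑ b, P a b) ≤ klDiv2 Q P :=
      klDiv_marg_le Q P hQ.1 hfull
    have h3 : condRateDistortion d (Y := Y) D Q - klDiv2 Q P ≤
        rateDistortion d (Y := Y) D (fun a => ∑ b, Q a b) -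
          klDiv (fun a => ∑ b, Q a b) (fun a => ∑ b, P a b) := by linarith
    exact h3.trans (le_csSup hbdd ⟨fun a => ∑ b, Q a b, hQX, rfl⟩)
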